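/- Let n₁, r, n₂ ≥ 1 and n₃ ≥ 1, A : Fin n₁ → Fin r → ZMod n₃ → ℂ, B : Fin r → Fin n₂ → ZMod n₃ → ℂ, and C : Fin n₁ → Fin n₂ → ZMod n₃ → ℂ. Then n₃ · Σ_{i,j,k} |(A * B) i j k − C i j k|² = Σ_{k ∈ ZMod n₃} Σ_{i,j} | (Σ_{l} Â i l k · B̂ l j k) − Ĉ i j k |², i.e., the squared Frobenius distance from the t-product A*B to C equals 1/n₃ times the sum over frequencies k of the squared Frobenius distances between the products of Fourier-domain frontal slices and the Fourier-domain slices of C. -/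

import Mathlib

open Finset

/-- Mode-3 discrete Fourier transform of a third-order tensor. -/
noncomputable def dft3 {n₁ n₂ n₃ : ℕ} [NeZero n₃]
    (A : Fin n₁ → Fin n₂ → ZMod n₃ → ℂ) : Fin n₁ → Fin n₂ → ZMod n₃ → ℂ :=
  fun i j k => ∑ m : ZMod n₃,
    A i j m * Complex.exp (-(2 * (Real.pi : ℂ) * Complex.I *
      ((k.val : ℂ) * (m.val : ℂ))) / (n₃ : ℂ))

/-- The t-product: matrix multiplication combined with circular convolution
along the third mode. -/
noncomputable def tProd3 {n₁ r n₂ n₃ : ℕ} [NeZero n₃]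
    (A : Fin n₁ → Fin r → ZMod n₃ → ℂ) (B : Fin r → Fin n₂ → ZMod n₃ → ℂ) :
    Fin n₁ → Fin n₂ → ZMod n₃ → ℂ :=
  fun i j k => ∑ l : Fin r, ∑ m : ZMod n₃, A i l m * B l j (k - m)

namespace TprodAux

noncomputable def E (n : ℕ) (a : ℤ) : ℂ :=
  Complex.exp (-(2 * (Real.pi : ℂ) * Complex.I * (a : ℂ)) / (n : ℂ))

lemma E_add (n : ℕ) (a b : ℤ) : E n (a + b) = E n a * E n b := by
  unfold E
  rw [← Complex.exp_add]
  congr 1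
  push_cast
  ring

lemma E_congr (n : ℕ) [NeZero n] {a b : ℤ} (h : (a : ZMod n) = (b : ZMod n)) :
    E n a = E n b := by
  have hdvd : (n : ℤ) ∣ a - b := by
    have : ((a - b : ℤ) : ZMod n) = 0 := by push_cast [h]; ring
    exact (ZMod.intCast_zmod_eq_zero_iff_dvd _ n).mp this
  obtain ⟨t, ht⟩ := hdvd
  have ha : a = b + n * t := by omega
  have hn : (n : ℂ) ≠ 0 := Nat.cast_ne_zero.2 (NeZero.ne n)
  have key : -(2 * (Real.pi : ℂ) * Complex.I * (a : ℂ)) / (n : ℂ) =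
      -(2 * (Real.pi : ℂ) * Complex.I * (b : ℂ)) / (n : ℂ) +
        ((-t : ℤ) : ℂ) * (2 * (Real.pi : ℂ) * Complex.I) := by
    rw [ha]; push_cast; field_simp; ring
  unfold E
  rw [key, Complex.exp_add, Complex.exp_int_mul_two_pi_mul_I, mul_one]

lemma E_conj (n : ℕ) (a : ℤ) : (starRingEnd ℂ) (E n a) = E n (-a) := by
  unfold E
  rw [← Complex.exp_conj]
  congr 1
  simp only [map_div₀, map_neg, map_mul, Complex.conj_I, Complex.conj_ofReal,
    map_intCast, map_ofNat, map_natCast]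
  push_cast
  ring

lemma E_sum (n : ℕ) [NeZero n] (d : ℤ) :
    ∑ k : ZMod n, E n ((k.val : ℤ) * d) = if (d : ZMod n) = 0 then (n : ℂ) else 0 := by
  have hn : (n : ℕ) ≠ 0 := NeZero.ne n
  set ζ : ℂ := Complex.exp (2 * (Real.pi : ℂ) * Complex.I / n) with hζ
  have hp : IsPrimitiveRoot ζ n := Complex.isPrimitiveRoot_exp n hn
  have hE : ∀ a : ℤ, E n a = ζ ^ (-a) := by
    intro a
    rw [hζ, ← Complex.exp_int_mul, E]
    congr 1
    push_cast
    ring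
  set w : ℂ := ζ ^ (-d) with hw
  have hEk : ∀ k : ZMod n, E n ((k.val : ℤ) * d) = w ^ k.val := by
    intro k
    rw [hE, hw, ← zpow_natCast (ζ ^ (-d)) k.val, ← zpow_mul]
    congr 1
    ring
  rw [Finset.sum_congr rfl fun k _ => hEk k]
  have hsum : ∑ k : ZMod n, w ^ k.val = ∑ i ∈ Finset.range n, w ^ i := by
    refine Finset.sum_nbij' (fun k => k.val) (fun i => (i : ZMod n))
      (fun k _ => Finset.mem_range.mpr (ZMod.val_lt k))
      (fun i _ => Finset.mem_univ _)
      (fun k _ => by simp [ZMod.natCast_val, ZMod.cast_id])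
      (fun i hi => ZMod.val_cast_of_lt (Finset.mem_range.mp hi))
      (fun k _ => rfl)
  rw [hsum]
  by_cases hd : (d : ZMod n) = 0
  · have : (n : ℤ) ∣ d := (ZMod.intCast_zmod_eq_zero_iff_dvd _ n).mp hd
    have hw1 : w = 1 := by
      rw [hw]
      have : (n : ℤ) ∣ -d := dvd_neg.mpr this
      exact hp.zpow_eq_one_iff_dvd (-d) |>.mpr this
    simp [hw1, hd]
  · have hw1 : w ≠ 1 := by
      intro h
      have : (n : ℤ) ∣ -d := (hp.zpow_eq_one_iff_dvd (-d)).mp (hw ▸ h)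
      have : (n : ℤ) ∣ d := (dvd_neg.mp this)
      exact hd ((ZMod.intCast_zmod_eq_zero_iff_dvd _ n).mpr this)
    have hwn : w ^ n = 1 := by
      rw [hw, ← zpow_natCast, ← zpow_mul, mul_comm, zpow_mul, zpow_natCast,
        hp.pow_eq_one, one_zpow]
    rw [geom_sum_eq hw1, hwn]
    simp [hd]

lemma parseval (n : ℕ) [NeZero n] (f : ZMod n → ℂ) :
    ∑ k : ZMod n, Complex.normSq (∑ m : ZMod n, f m * E n ((k.val : ℤ) * (m.val : ℤ)))
      = (n : ℝ) * ∑ m : ZMod n, Complex.normSq (f m) := by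
  have key : ∑ k : ZMod n,
      ((Complex.normSq (∑ m : ZMod n, f m * E n ((k.val : ℤ) * (m.val : ℤ))) : ℂ))
      = (n : ℂ) * ∑ m : ZMod n, (Complex.normSq (f m) : ℂ) := by
    have expand : ∀ k : ZMod n,
        ((Complex.normSq (∑ m : ZMod n, f m * E n ((k.val : ℤ) * (m.val : ℤ))) : ℂ))
        = ∑ m : ZMod n, ∑ m' : ZMod n,
            f m * (starRingEnd ℂ) (f m') * E n ((k.val : ℤ) * ((m.val : ℤ) - (m'.val : ℤ))) := by
      intro k
      rw [← Complex.mul_conj, map_sum, Finset.sum_mul_sum]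
      refine Finset.sum_congr rfl fun m _ => Finset.sum_congr rfl fun m' _ => ?_
      rw [map_mul, E_conj]
      have : E n ((k.val : ℤ) * (m.val : ℤ)) * E n (-((k.val : ℤ) * (m'.val : ℤ)))
          = E n ((k.val : ℤ) * ((m.val : ℤ) - (m'.val : ℤ))) := by
        rw [← E_add]; congr 1; ring
      calc f m * E n ((k.val : ℤ) * (m.val : ℤ)) *
            ((starRingEnd ℂ) (f m') * E n (-((k.val : ℤ) * (m'.val : ℤ))))
          = f m * (starRingEnd ℂ) (f m') *
            (E n ((k.val : ℤ) * (m.val : ℤ)) * E n (-((k.val : ℤ) * (m'.val : ℤ)))) := by ring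
        _ = _ := by rw [this]
    rw [Finset.sum_congr rfl fun k _ => expand k]
    rw [Finset.sum_comm]
    rw [Finset.sum_congr rfl fun m _ => Finset.sum_comm]
    have inner : ∀ m : ZMod n,
        (∑ m' : ZMod n, ∑ k : ZMod n,
          f m * (starRingEnd ℂ) (f m') * E n ((k.val : ℤ) * ((m.val : ℤ) - (m'.val : ℤ))))
        = (n : ℂ) * (Complex.normSq (f m) : ℂ) := by
      intro m
      have step : ∀ m' : ZMod n,
          (∑ k : ZMod n, f m * (starRingEnd ℂ) (f m') *
              E n ((k.val : ℤ) * ((m.val : ℤ) - (m'.val : ℤ))))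
          = f m * (starRingEnd ℂ) (f m') * (if m = m' then (n : ℂ) else 0) := by
        intro m'
        rw [← Finset.mul_sum, E_sum]
        congr 2
        have hc : (((m.val : ℤ) - (m'.val : ℤ) : ℤ) : ZMod n) = m - m' := by
          push_cast [ZMod.natCast_val, ZMod.cast_id]
          ring
        simp only [hc, sub_eq_zero]
      rw [Finset.sum_congr rfl fun m' _ => step m']
      rw [Finset.sum_eq_single m
        (fun b _ hb => by simp [if_neg (Ne.symm hb)])
        (fun h => absurd (Finset.mem_univ m) h)]
      rw [if_pos rfl, Complex.mul_conj]
      ring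
    rw [Finset.sum_congr rfl fun m _ => inner m, ← Finset.mul_sum]
  have := congrArg Complex.re key
  simpa [Complex.ofReal_sum, ← Complex.ofReal_natCast, ← Complex.ofReal_mul,
    ← Complex.ofReal_sum] using this

lemma dft3_eq {n₁ n₂ n₃ : ℕ} [NeZero n₃] (X : Fin n₁ → Fin n₂ → ZMod n₃ → ℂ)
    (i : Fin n₁) (j : Fin n₂) (k : ZMod n₃) :
    dft3 X i j k = ∑ m : ZMod n₃, X i j m * E n₃ ((k.val : ℤ) * (m.val : ℤ)) := by
  unfold dft3 E
  refine Finset.sum_congr rfl fun m _ => ?_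
  congr 2
  push_cast
  ring

lemma conv {n₁ r n₂ n₃ : ℕ} [NeZero n₃]
    (A : Fin n₁ → Fin r → ZMod n₃ → ℂ) (B : Fin r → Fin n₂ → ZMod n₃ → ℂ)
    (i : Fin n₁) (j : Fin n₂) (k : ZMod n₃) :
    ∑ l : Fin r, dft3 A i l k * dft3 B l j k
      = ∑ m : ZMod n₃, tProd3 A B i j m * E n₃ ((k.val : ℤ) * (m.val : ℤ)) := by
  calc ∑ l : Fin r, dft3 A i l k * dft3 B l j k
      = ∑ l : Fin r, ∑ a : ZMod n₃, ∑ b : ZMod n₃,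
          A i l a * B l j b * E n₃ ((k.val : ℤ) * (((a + b).val : ℕ) : ℤ)) := by
        refine Finset.sum_congr rfl fun l _ => ?_
        rw [dft3_eq, dft3_eq, Finset.sum_mul_sum]
        refine Finset.sum_congr rfl fun a _ => Finset.sum_congr rfl fun b _ => ?_
        have he : E n₃ ((k.val : ℤ) * (a.val : ℤ)) * E n₃ ((k.val : ℤ) * (b.val : ℤ))
            = E n₃ ((k.val : ℤ) * (((a + b).val : ℕ) : ℤ)) := by
          rw [← E_add]
          apply E_congr
          push_cast [ZMod.natCast_val, ZMod.cast_id]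
          ring
        calc A i l a * E n₃ ((k.val : ℤ) * (a.val : ℤ)) *
              (B l j b * E n₃ ((k.val : ℤ) * (b.val : ℤ)))
            = A i l a * B l j b *
              (E n₃ ((k.val : ℤ) * (a.val : ℤ)) * E n₃ ((k.val : ℤ) * (b.val : ℤ))) := by ring
          _ = _ := by rw [he]
    _ = ∑ m : ZMod n₃, tProd3 A B i j m * E n₃ ((k.val : ℤ) * (m.val : ℤ)) := by
        unfold tProd3
        conv_rhs => simp only [Finset.sum_mul]
        conv_rhs => rw [Finset.sum_comm]
        refine Finset.sum_congr rfl fun l _ => ?_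
        conv_rhs => rw [Finset.sum_comm]
        refine Finset.sum_congr rfl fun a _ => ?_
        refine Fintype.sum_equiv (Equiv.addLeft a) _ _ fun b => ?_
        simp [add_sub_cancel_left]

end TprodAux

/-- The squared Frobenius distance from `A * B` to `C` equals `1/n₃` times the
sum over frequencies of the squared Frobenius distances between the products of
the Fourier-domain frontal slices and the Fourier-domain slices of `C`. -/
theorem tprod_frobenius_distance {n₁ r n₂ n₃ : ℕ}
    (hn₁ : 1 ≤ n₁) (hr : 1 ≤ r) (hn₂ : 1 ≤ n₂) [NeZero n₃]
    (A : Fin n₁ → Fin r → ZMod n₃ → ℂ) (B : Fin r → Fin n₂ → ZMod n₃ → ℂ)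
    (C : Fin n₁ → Fin n₂ → ZMod n₃ → ℂ) :
    (n₃ : ℝ) * (∑ i : Fin n₁, ∑ j : Fin n₂, ∑ k : ZMod n₃,
        ‖tProd3 A B i j k - C i j k‖ ^ 2) =
      ∑ k : ZMod n₃, ∑ i : Fin n₁, ∑ j : Fin n₂,
        ‖(∑ l : Fin r, dft3 A i l k * dft3 B l j k) -
          dft3 C i j k‖ ^ 2 := by
  simp only [Complex.sq_norm]
  have hper : ∀ (i : Fin n₁) (j : Fin n₂) (k : ZMod n₃),
      (∑ l : Fin r, dft3 A i l k * dft3 B l j k) - dft3 C i j k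
        = ∑ m : ZMod n₃, (tProd3 A B i j m - C i j m) *
            TprodAux.E n₃ ((k.val : ℤ) * (m.val : ℤ)) := by
    intro i j k
    rw [TprodAux.conv, TprodAux.dft3_eq, ← Finset.sum_sub_distrib]
    exact Finset.sum_congr rfl fun m _ => (sub_mul _ _ _).symm
  have step1 : (∑ k : ZMod n₃, ∑ i : Fin n₁, ∑ j : Fin n₂,
      Complex.normSq ((∑ l : Fin r, dft3 A i l k * dft3 B l j k) - dft3 C i j k))
      = ∑ i : Fin n₁, ∑ j : Fin n₂, ∑ k : ZMod n₃,
          Complex.normSq (∑ m : ZMod n₃, (tProd3 A B i j m - C i j m) *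
            TprodAux.E n₃ ((k.val : ℤ) * (m.val : ℤ))) := by
    rw [Finset.sum_comm]
    refine Finset.sum_congr rfl fun i _ => ?_
    rw [Finset.sum_comm]
    refine Finset.sum_congr rfl fun j _ => Finset.sum_congr rfl fun k _ => ?_
    rw [hper]
  rw [step1, Finset.mul_sum]
  refine Finset.sum_congr rfl fun i _ => ?_
  rw [Finset.mul_sum]
  refine Finset.sum_congr rfl fun j _ => ?_
  exact (TprodAux.parseval n₃ (fun m => tProd3 A B i j m - C i j m)).symm
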